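/- Let n ≥ 1, let R = ℂ[p₁, …, pₙ, q₁, …, qₙ] be the polynomial ring in 2n variables, equipped with the standard Poisson bracket {f, g} := ∑_{i=1}^{n} (∂f/∂p_i · ∂g/∂q_i − ∂f/∂q_i · ∂g/∂p_i), and let 𝔪₀ := (p₁, …, pₙ, q₁, …, qₙ) be the maximal ideal at the origin. Suppose I ⊊ R is a proper ideal which is involutive ({f, g} ∈ I for all f, g ∈ I) and contains 𝔪₀^l for some integer l ≥ 1. Then I ⊆ 𝔪₀². -/

import Mathlib

open MvPolynomial

section St19Aux

variable {σ : Type*} [DecidableEq σ]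

theorem st19_ker :
    Ideal.span (Set.range (X : σ → MvPolynomial σ ℂ)) = RingHom.ker constantCoeff := by
  apply le_antisymm
  · rw [Ideal.span_le]
    rintro _ ⟨i, rfl⟩
    simp [RingHom.mem_ker]
  · intro x hx
    rw [RingHom.mem_ker] at hx
    have : Set.range (X : σ → MvPolynomial σ ℂ) = X '' Set.univ := by simp
    rw [this, mem_ideal_span_X_image]
    intro m hm
    have hm0 : m ≠ 0 := by
      rintro rfl
      exact (mem_support_iff.mp hm) hx
    obtain ⟨i, hi⟩ := Finsupp.ne_iff.mp hm0
    exact ⟨i, Set.mem_univ i, by simpa using hi⟩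

theorem st19_monomial_mem (d : σ →₀ ℕ) (c : ℂ) :
    monomial d c ∈ Ideal.span (Set.range (X : σ → MvPolynomial σ ℂ)) ^ (d.sum fun _ e => e) := by
  induction d using Finsupp.induction with
  | zero => simp
  | single_add a b f ha hb ih =>
    have h1 : monomial (Finsupp.single a b + f) c = X a ^ b * monomial f c := by
      rw [X_pow_eq_monomial, monomial_mul, one_mul]
    have h2 : ((Finsupp.single a b + f).sum fun _ e => e) = b + (f.sum fun _ e => e) := by
      rw [Finsupp.sum_add_index (by simp) (by simp), Finsupp.sum_single_index rfl]
    rw [h1, h2, pow_add]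
    exact Ideal.mul_mem_mul (Ideal.pow_mem_pow (Ideal.subset_span (Set.mem_range_self a)) b) ih

theorem st19_pderiv_mem (i : σ) (k : ℕ) (g : MvPolynomial σ ℂ)
    (hg : g ∈ Ideal.span (Set.range (X : σ → MvPolynomial σ ℂ)) ^ (k + 1)) :
    pderiv i g ∈ Ideal.span (Set.range (X : σ → MvPolynomial σ ℂ)) ^ k := by
  induction k generalizing g with
  | zero => simp [Ideal.one_eq_top]
  | succ k ih =>
    rw [pow_succ] at hg
    refine Submodule.mul_induction_on hg (fun a ha b hb => ?_) (fun x y hx hy => ?_)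
    · rw [pderiv_mul]
      refine Ideal.add_mem _ ?_ ?_
      · rw [pow_succ]
        exact Ideal.mul_mem_mul (ih a ha) hb
      · exact Ideal.mul_mem_right _ _ ha
    · rw [map_add]
      exact Ideal.add_mem _ hx hy

theorem st19_constantCoeff_pderiv (v : σ) (f : MvPolynomial σ ℂ) :
    constantCoeff (pderiv v f) = coeff (Finsupp.single v 1) f := by
  induction f using MvPolynomial.induction_on' with
  | monomial d c =>
    rw [pderiv_monomial, constantCoeff_monomial, coeff_monomial]
    rcases eq_or_ne d (Finsupp.single v 1) with rfl | hd
    · simp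
    · rw [if_neg hd]
      by_cases h0 : d - Finsupp.single v 1 = 0
      · rw [if_pos h0]
        have hle : d ≤ Finsupp.single v 1 := tsub_eq_zero_iff_le.mp h0
        by_cases hv : d v = 0
        · simp [hv]
        · exfalso
          apply hd
          ext u
          rcases eq_or_ne u v with rfl | hu
          · have := hle u
            rw [Finsupp.single_eq_same] at this ⊢
            omega
          · have := hle u
            rw [Finsupp.single_eq_of_ne' (Ne.symm hu)] at this ⊢
            omega
      · rw [if_neg h0]
  | add p q hp hq => simp [map_add, hp, hq, coeff_add]

theorem st19_mem_sq (f : MvPolynomial σ ℂ) (h0 : constantCoeff f = 0)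
    (h1 : ∀ v : σ, coeff (Finsupp.single v 1) f = 0) :
    f ∈ Ideal.span (Set.range (X : σ → MvPolynomial σ ℂ)) ^ 2 := by
  rw [f.as_sum]
  refine Ideal.sum_mem _ (fun d hd => ?_)
  have h2 : 2 ≤ d.sum fun _ e => e := by
    by_contra hlt
    push_neg at hlt
    interval_cases h : (d.sum fun _ e => e)
    · -- sum = 0 ⇒ d = 0
      have hd0 : d = 0 := by
        ext a
        by_contra ha
        have := Finsupp.mem_support_iff.mpr ha
        have : 0 < d.sum fun _ e => e := by
          refine Finset.sum_pos' (fun _ _ => Nat.zero_le _) ⟨a, this, Nat.pos_of_ne_zero ha⟩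
        omega
      rw [hd0] at hd
      exact (mem_support_iff.mp hd) h0
    · -- sum = 1 ⇒ d = single a 1
      have hdne : d ≠ 0 := by
        intro hd0
        rw [hd0] at h
        simp at h
      obtain ⟨a, ha⟩ := Finsupp.support_nonempty_iff.mpr hdne
      have hda : d a ≤ 1 := by
        have := Finset.single_le_sum (f := (d : σ → ℕ)) (fun _ _ => Nat.zero_le _) ha
        have hsum : (d.sum fun _ e => e) = ∑ x ∈ d.support, d x := rfl
        omega
      have hda1 : d a = 1 := by
        have := Finsupp.mem_support_iff.mp ha
        omega
      have hrest : ∀ b, b ≠ a → d b = 0 := by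
        intro b hb
        by_contra hb0
        have hbs : b ∈ d.support := Finsupp.mem_support_iff.mpr hb0
        have := Finset.add_sum_erase d.support d ha
        have h2' : d b ≤ ∑ x ∈ d.support.erase a, d x :=
          Finset.single_le_sum (fun _ _ => Nat.zero_le _)
            (Finset.mem_erase.mpr ⟨hb, hbs⟩)
        have hsum : (d.sum fun _ e => e) = ∑ x ∈ d.support, d x := rfl
        omega
      have : d = Finsupp.single a 1 := by
        ext u
        rcases eq_or_ne u a with rfl | hu
        · simp [hda1]
        · rw [Finsupp.single_eq_of_ne' (Ne.symm hu), hrest u hu]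
      exact (mem_support_iff.mp hd) (this ▸ h1 a)
  exact Ideal.pow_le_pow_right h2 (st19_monomial_mem d _)

noncomputable def st19pb (n : ℕ) (f g : MvPolynomial (Fin n ⊕ Fin n) ℂ) : MvPolynomial (Fin n ⊕ Fin n) ℂ :=
  ∑ i : Fin n,
    (pderiv (Sum.inl i) f * pderiv (Sum.inr i) g - pderiv (Sum.inr i) f * pderiv (Sum.inl i) g)

theorem st19pb_add (n : ℕ) (f x y : MvPolynomial (Fin n ⊕ Fin n) ℂ) :
    st19pb n f (x + y) = st19pb n f x + st19pb n f y := by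
  unfold st19pb
  rw [← Finset.sum_add_distrib]
  refine Finset.sum_congr rfl fun i _ => ?_
  rw [map_add, map_add]
  ring

theorem st19pb_C_mul (n : ℕ) (c : ℂ) (f x : MvPolynomial (Fin n ⊕ Fin n) ℂ) :
    st19pb n f (C c * x) = C c * st19pb n f x := by
  unfold st19pb
  rw [Finset.mul_sum]
  refine Finset.sum_congr rfl fun i _ => ?_
  rw [pderiv_C_mul, pderiv_C_mul]
  ring

theorem st19pb_mem (n : ℕ) (k : ℕ) (f x : MvPolynomial (Fin n ⊕ Fin n) ℂ)
    (hx : x ∈ Ideal.span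
      (Set.range (X : Fin n ⊕ Fin n → MvPolynomial (Fin n ⊕ Fin n) ℂ)) ^ (k + 1)) :
    st19pb n f x ∈ Ideal.span
      (Set.range (X : Fin n ⊕ Fin n → MvPolynomial (Fin n ⊕ Fin n) ℂ)) ^ k := by
  refine Ideal.sum_mem _ fun i _ => Ideal.sub_mem _ ?_ ?_ <;>
    exact Ideal.mul_mem_left _ _ (st19_pderiv_mem _ k x hx)

theorem st19pb_powL (n : ℕ) (f : MvPolynomial (Fin n ⊕ Fin n) ℂ) (j : Fin n) (m : ℕ) :
    st19pb n f (X (Sum.inr j) ^ m)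
      = (m : MvPolynomial (Fin n ⊕ Fin n) ℂ) * X (Sum.inr j) ^ (m - 1)
        * pderiv (Sum.inl j) f := by
  unfold st19pb
  rw [Finset.sum_eq_single j]
  · have h1 : pderiv (Sum.inl j) ((X (Sum.inr j) : MvPolynomial (Fin n ⊕ Fin n) ℂ) ^ m) = 0 := by
      rw [pderiv_pow, pderiv_X_of_ne (by simp), mul_zero]
    rw [h1, pderiv_pow, pderiv_X_self, mul_zero, sub_zero, mul_one]
    ring
  · intro i _ hij
    have h1 : pderiv (Sum.inl i) ((X (Sum.inr j) : MvPolynomial (Fin n ⊕ Fin n) ℂ) ^ m) = 0 := by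
      rw [pderiv_pow, pderiv_X_of_ne (by simp), mul_zero]
    have h2 : pderiv (Sum.inr i) ((X (Sum.inr j) : MvPolynomial (Fin n ⊕ Fin n) ℂ) ^ m) = 0 := by
      rw [pderiv_pow, pderiv_X_of_ne (by simp [Ne.symm hij]), mul_zero]
    rw [h1, h2, mul_zero, mul_zero, sub_zero]
  · simp

theorem st19pb_powR (n : ℕ) (f : MvPolynomial (Fin n ⊕ Fin n) ℂ) (j : Fin n) (m : ℕ) :
    st19pb n f (X (Sum.inl j) ^ m)
      = (m : MvPolynomial (Fin n ⊕ Fin n) ℂ) * X (Sum.inl j) ^ (m - 1)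
        * (- pderiv (Sum.inr j) f) := by
  unfold st19pb
  rw [Finset.sum_eq_single j]
  · have h1 : pderiv (Sum.inr j) ((X (Sum.inl j) : MvPolynomial (Fin n ⊕ Fin n) ℂ) ^ m) = 0 := by
      rw [pderiv_pow, pderiv_X_of_ne (by simp), mul_zero]
    rw [h1, pderiv_pow, pderiv_X_self, mul_zero, zero_sub, mul_one]
    ring
  · intro i _ hij
    have h1 : pderiv (Sum.inr i) ((X (Sum.inl j) : MvPolynomial (Fin n ⊕ Fin n) ℂ) ^ m) = 0 := by
      rw [pderiv_pow, pderiv_X_of_ne (by simp), mul_zero]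
    have h2 : pderiv (Sum.inl i) ((X (Sum.inl j) : MvPolynomial (Fin n ⊕ Fin n) ℂ) ^ m) = 0 := by
      rw [pderiv_pow, pderiv_X_of_ne (by simp [Ne.symm hij]), mul_zero]
    rw [h1, h2, mul_zero, mul_zero, sub_zero]
  · simp

theorem st19_main (n : ℕ) (I : Ideal (MvPolynomial (Fin n ⊕ Fin n) ℂ))
    (l : ℕ) (hl : 1 ≤ l)
    (hml : (Ideal.span (Set.range (X : Fin n ⊕ Fin n → MvPolynomial (Fin n ⊕ Fin n) ℂ))) ^ l ≤ I)
    (hIM : I ≤ Ideal.span (Set.range (X : Fin n ⊕ Fin n → MvPolynomial (Fin n ⊕ Fin n) ℂ)))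
    (f : MvPolynomial (Fin n ⊕ Fin n) ℂ) (hf : f ∈ I)
    (hfb : ∀ u ∈ I, st19pb n f u ∈ I)
    (w g : MvPolynomial (Fin n ⊕ Fin n) ℂ)
    (hw : w ∈ Ideal.span (Set.range (X : Fin n ⊕ Fin n → MvPolynomial (Fin n ⊕ Fin n) ℂ)))
    (c : ℂ) (hc : c ≠ 0) (hgc : constantCoeff g = c)
    (hbr : ∀ m : ℕ, st19pb n f (w ^ m)
      = (m : MvPolynomial (Fin n ⊕ Fin n) ℂ) * w ^ (m - 1) * g) : False := by
  set M := Ideal.span (Set.range (X : Fin n ⊕ Fin n → MvPolynomial (Fin n ⊕ Fin n) ℂ)) with hM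
  have hh : g - C c ∈ M := by
    rw [hM, st19_ker, RingHom.mem_ker, map_sub, hgc, constantCoeff_C, sub_self]
  have key : ∀ k, k ≤ l → ∃ u ∈ I,
      u - C ((l.descFactorial k : ℂ) * c ^ k) * w ^ (l - k) ∈ M ^ (l - k + 1) := by
    intro k
    induction k with
    | zero =>
      intro _
      refine ⟨w ^ l, hml (Ideal.pow_mem_pow hw l), ?_⟩
      simp only [Nat.descFactorial_zero, Nat.cast_one, pow_zero, mul_one, map_one, one_mul,
        Nat.sub_zero, sub_self]
      exact Submodule.zero_mem _
    | succ k ih =>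
      intro hk1
      obtain ⟨u, huI, hr⟩ := ih (by omega)
      set a := ((l.descFactorial k : ℂ) * c ^ k) with ha
      set m := l - k with hmdef
      have hm : 1 ≤ m := by omega
      have hm1 : m - 1 = l - (k + 1) := by omega
      have hm2 : l - (k + 1) + 1 = m := by omega
      set r := u - C a * w ^ m with hrdef
      have hu : u = C a * w ^ m + r := by rw [hrdef]; ring
      refine ⟨st19pb n f u, hfb u huI, ?_⟩
      have hca' : (C ((l.descFactorial (k + 1) : ℂ) * c ^ (k + 1)) :
          MvPolynomial (Fin n ⊕ Fin n) ℂ) = C a * C c * ((m : ℕ) : MvPolynomial (Fin n ⊕ Fin n) ℂ) := by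
        rw [← map_natCast (C : ℂ →+* MvPolynomial (Fin n ⊕ Fin n) ℂ) m, ← map_mul, ← map_mul]
        congr 1
        rw [ha, Nat.descFactorial_succ, hmdef]
        push_cast
        ring
      have heq : st19pb n f u - C ((l.descFactorial (k + 1) : ℂ) * c ^ (k + 1)) * w ^ (l - (k + 1))
          = C a * (((m : ℕ) : MvPolynomial (Fin n ⊕ Fin n) ℂ) * w ^ (m - 1) * (g - C c))
            + st19pb n f r := by
        conv_lhs => rw [hu]
        rw [st19pb_add, st19pb_C_mul, hbr m, hca', ← hm1]
        ring
      rw [heq, hm2]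
      refine Ideal.add_mem _ ?_ (st19pb_mem n m f r hr)
      have h1 : w ^ (m - 1) * (g - C c) ∈ M ^ m := by
        have := Ideal.mul_mem_mul (Ideal.pow_mem_pow hw (m - 1)) hh
        rwa [← pow_succ, Nat.sub_add_cancel hm] at this
      have h2 : ((m : ℕ) : MvPolynomial (Fin n ⊕ Fin n) ℂ) * (w ^ (m - 1) * (g - C c)) ∈ M ^ m :=
        Ideal.mul_mem_left _ _ h1
      have h3 := Ideal.mul_mem_left _ (C a) h2
      convert h3 using 1
      ring
  obtain ⟨u, huI, hr⟩ := key l le_rfl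
  rw [Nat.sub_self, pow_zero, mul_one, zero_add, pow_one] at hr
  have hCl : (C ((l.descFactorial l : ℂ) * c ^ l) : MvPolynomial (Fin n ⊕ Fin n) ℂ) ∈ M := by
    have := Ideal.sub_mem _ (hIM huI) hr
    simpa using this
  rw [hM, st19_ker, RingHom.mem_ker, constantCoeff_C] at hCl
  have : ((l.descFactorial l : ℂ) * c ^ l) ≠ 0 := by
    refine mul_ne_zero ?_ (pow_ne_zero _ hc)
    rw [Nat.descFactorial_self]
    exact_mod_cast Nat.factorial_ne_zero l
  exact this hCl

end St19Aux

/-- Let `R = ℂ[p₁,…,pₙ,q₁,…,qₙ]` with the standard Poisson bracket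
`{f,g} = ∑ᵢ (∂f/∂pᵢ·∂g/∂qᵢ − ∂f/∂qᵢ·∂g/∂pᵢ)` (here `pᵢ = X (inl i)`, `qᵢ = X (inr i)`),
and let `𝔪₀` be the maximal ideal generated by all the variables.  If `I ⊊ R` is a proper
involutive ideal containing `𝔪₀^l` for some `l ≥ 1`, then `I ⊆ 𝔪₀²`. -/
theorem statement19 (n : ℕ) (hn : 1 ≤ n)
    (I : Ideal (MvPolynomial (Fin n ⊕ Fin n) ℂ)) (hproper : I ≠ ⊤)
    (hinv : ∀ f ∈ I, ∀ g ∈ I,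
      (∑ i : Fin n,
        (pderiv (Sum.inl i) f * pderiv (Sum.inr i) g
          - pderiv (Sum.inr i) f * pderiv (Sum.inl i) g)) ∈ I)
    (l : ℕ) (hl : 1 ≤ l)
    (hml : (Ideal.span (Set.range (X : Fin n ⊕ Fin n → MvPolynomial (Fin n ⊕ Fin n) ℂ))) ^ l
            ≤ I) :
    I ≤ (Ideal.span (Set.range (X : Fin n ⊕ Fin n → MvPolynomial (Fin n ⊕ Fin n) ℂ))) ^ 2 := by
  set M := Ideal.span (Set.range (X : Fin n ⊕ Fin n → MvPolynomial (Fin n ⊕ Fin n) ℂ)) with hM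
  have hMmax : M.IsMaximal := by
    rw [hM, st19_ker]
    exact RingHom.ker_isMaximal_of_surjective constantCoeff fun c => ⟨C c, by simp⟩
  have hIM : I ≤ M := by
    obtain ⟨P, hPmax, hIP⟩ := I.exists_le_maximal hproper
    have hMP : M ≤ P := hPmax.isPrime.le_of_pow_le (le_trans hml hIP)
    rwa [hMmax.eq_of_le hPmax.ne_top hMP]
  intro f hf
  by_contra hf2
  have hcc : constantCoeff f = 0 := by
    have := hIM hf
    rwa [hM, st19_ker, RingHom.mem_ker] at this
  have hex : ∃ v, coeff (Finsupp.single v 1) f ≠ 0 := by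
    by_contra h
    push_neg at h
    exact hf2 (st19_mem_sq f hcc h)
  obtain ⟨v, hv⟩ := hex
  have hfb : ∀ u ∈ I, st19pb n f u ∈ I := fun u hu => hinv f hf u hu
  rcases v with j | j
  · exact st19_main n I l hl hml hIM f hf hfb (X (Sum.inr j)) (pderiv (Sum.inl j) f)
      (Ideal.subset_span (Set.mem_range_self _)) _ hv
      (st19_constantCoeff_pderiv (Sum.inl j) f) (st19pb_powL n f j)
  · refine st19_main n I l hl hml hIM f hf hfb (X (Sum.inl j)) (- pderiv (Sum.inr j) f)
      (Ideal.subset_span (Set.mem_range_self _)) (- coeff (Finsupp.single (Sum.inr j) 1) f)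
      (neg_ne_zero.mpr hv) ?_ (st19pb_powR n f j)
    rw [map_neg, st19_constantCoeff_pderiv]
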